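/- Let x = (x^1,...,x^T) be a sequence of values in [0,1] and 1 ≥ α > β ≥ 0. Let y = RS(x, α, β). Then the total transition cost of y is at most 1/(α-β) times that of x: ∑_{t=1}^{T-1} |y^{t+1} - y^t| ≤ (1/(α-β)) · ∑_{t=1}^{T-1} |x^{t+1} - x^t|. -/
import Mathlib


/- The two-threshold rounding scheme `RS`.  Given a time horizon `T`, a sequence
`x : ℕ → ℝ` (indices `0, …, T-1`) of values in `[0,1]` and thresholds `α ≥ β`,
it produces a `{0,1}`-valued sequence `y`:
* if `x t ≥ α` then `y t = 1`;
* if `x t ≤ β` then `y t = 0`;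
* on a maximal interval `[t₁,t₂]` with `β < x < α` throughout, `y = 1` iff both
  (`t₁ = 0` or `x (t₁-1) ≥ α`) and (`t₂ = T-1` or `x (t₂+1) ≥ α`);
  this is expressed below by saying that the nearest non-strict index on each
  side (within the horizon), when it exists, carries a value `≥ α`. -/
open Classical in
noncomputable def RS (T : ℕ) (x : ℕ → ℝ) (α β : ℝ) (t : ℕ) : ℝ :=
  if α ≤ x t then 1
  else if x t ≤ β then 0
  else if ((∀ s, s ≤ t → β < x s ∧ x s < α) ∨
           (∃ s, s < t ∧ α ≤ x s ∧ ∀ u, s < u → u ≤ t → β < x u ∧ x u < α)) ∧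
          ((∀ s, t ≤ s → s < T → β < x s ∧ x s < α) ∨
           (∃ s, t < s ∧ s < T ∧ α ≤ x s ∧ ∀ u, t ≤ u → u < s → β < x u ∧ x u < α))
  then 1 else 0

namespace RSproof

def Bnd (x : ℕ → ℝ) (α β : ℝ) (t : ℕ) : Prop := β < x t ∧ x t < α

def Lp (x : ℕ → ℝ) (α β : ℝ) (t : ℕ) : Prop :=
  (∀ s, s ≤ t → Bnd x α β s) ∨
  (∃ s, s < t ∧ α ≤ x s ∧ ∀ u, s < u → u ≤ t → Bnd x α β u)

def Rp (T : ℕ) (x : ℕ → ℝ) (α β : ℝ) (t : ℕ) : Prop :=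
  (∀ s, t ≤ s → s < T → Bnd x α β s) ∨
  (∃ s, t < s ∧ s < T ∧ α ≤ x s ∧ ∀ u, t ≤ u → u < s → Bnd x α β u)

def L0 (x : ℕ → ℝ) (α β : ℝ) (t : ℕ) : Prop := ∀ s, s ≤ t → Bnd x α β s

open Classical in
/-- The potential function. -/
noncomputable def Phi (T : ℕ) (x : ℕ → ℝ) (α β : ℝ) (t : ℕ) : ℝ :=
  if α ≤ x t then 0
  else if x t ≤ β then 0
  else if L0 x α β t ∧ Rp T x α β t then (x t - α) / (α - β)
  else if Lp x α β t ∧ Rp T x α β t then (α - x t) / (α - β)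
  else if Lp x α β t then (β - x t) / (α - β)
  else (x t - β) / (α - β)

variable {T : ℕ} {x : ℕ → ℝ} {α β : ℝ} {t : ℕ}

open Classical in
lemma RS_eq : RS T x α β t =
    if α ≤ x t then (1:ℝ) else if x t ≤ β then 0
    else if Lp x α β t ∧ Rp T x α β t then 1 else 0 := by
  unfold RS Lp Rp Bnd
  split_ifs <;> rfl

lemma RS_A (h : α ≤ x t) : RS T x α β t = 1 := by
  rw [RS_eq, if_pos h]

lemma RS_B (h1 : ¬ α ≤ x t) (h2 : x t ≤ β) : RS T x α β t = 0 := by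
  rw [RS_eq, if_neg h1, if_pos h2]

lemma RS_live (hb : Bnd x α β t) (hL : Lp x α β t) (hR : Rp T x α β t) :
    RS T x α β t = 1 := by
  rw [RS_eq, if_neg (not_le.2 hb.2), if_neg (not_le.2 hb.1), if_pos ⟨hL, hR⟩]

lemma RS_dead (hb : Bnd x α β t) (h : ¬ (Lp x α β t ∧ Rp T x α β t)) :
    RS T x α β t = 0 := by
  rw [RS_eq, if_neg (not_le.2 hb.2), if_neg (not_le.2 hb.1), if_neg h]

lemma Phi_A (h : α ≤ x t) : Phi T x α β t = 0 := by
  rw [Phi, if_pos h]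

lemma Phi_B (h1 : ¬ α ≤ x t) (h2 : x t ≤ β) : Phi T x α β t = 0 := by
  rw [Phi, if_neg h1, if_pos h2]

lemma Phi_LI (hb : Bnd x α β t) (h0 : L0 x α β t) (hR : Rp T x α β t) :
    Phi T x α β t = (x t - α) / (α - β) := by
  rw [Phi, if_neg (not_le.2 hb.2), if_neg (not_le.2 hb.1), if_pos ⟨h0, hR⟩]

lemma Phi_LN (hb : Bnd x α β t) (h0 : ¬ L0 x α β t) (hL : Lp x α β t)
    (hR : Rp T x α β t) : Phi T x α β t = (α - x t) / (α - β) := by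
  rw [Phi, if_neg (not_le.2 hb.2), if_neg (not_le.2 hb.1),
    if_neg (fun h => h0 h.1), if_pos ⟨hL, hR⟩]

lemma Phi_DA (hb : Bnd x α β t) (hL : Lp x α β t) (hR : ¬ Rp T x α β t) :
    Phi T x α β t = (β - x t) / (α - β) := by
  rw [Phi, if_neg (not_le.2 hb.2), if_neg (not_le.2 hb.1),
    if_neg (fun h => hR h.2), if_neg (fun h => hR h.2), if_pos hL]

lemma Phi_DB (hb : Bnd x α β t) (hL : ¬ Lp x α β t) :
    Phi T x α β t = (x t - β) / (α - β) := by
  have h0 : ¬ L0 x α β t := fun h => hL (Or.inl h)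
  rw [Phi, if_neg (not_le.2 hb.2), if_neg (not_le.2 hb.1),
    if_neg (fun h => h0 h.1), if_neg (fun h => hL h.1), if_neg hL]

/- structural facts -/

lemma notL_of_low (hαβ : β < α) (h : x t ≤ β) : ¬ Lp x α β (t+1) := by
  rintro (h0 | ⟨s, hst, hsα, hsu⟩)
  · have := (h0 t (Nat.le_succ t)).1; linarith
  · rcases Nat.lt_succ_iff_lt_or_eq.1 hst with hlt | rfl
    · have := (hsu t hlt (Nat.le_succ t)).1; linarith
    · linarith

lemma L_of_high (h : α ≤ x t) (hb1 : Bnd x α β (t+1)) : Lp x α β (t+1) := by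
  refine Or.inr ⟨t, Nat.lt_succ_self t, h, fun u hu1 hu2 => ?_⟩
  have : u = t + 1 := by omega
  subst this; exact hb1

lemma notL0_of_high (h : α ≤ x t) : ¬ L0 x α β (t+1) := by
  intro h0
  exact absurd (h0 t (Nat.le_succ t)).2 (not_lt.2 h)

lemma R_of_high (h : α ≤ x (t+1)) (hb : Bnd x α β t) (hT : t + 1 < T) :
    Rp T x α β t := by
  refine Or.inr ⟨t+1, Nat.lt_succ_self t, hT, h, fun u hu1 hu2 => ?_⟩
  have : u = t := by omega
  subst this; exact hb

lemma notR_of_low (hαβ : β < α) (h : x (t+1) ≤ β) (hT : t + 1 < T) :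
    ¬ Rp T x α β t := by
  rintro (h0 | ⟨s, hts, hsT, hsα, hsu⟩)
  · have := (h0 (t+1) (Nat.le_succ t) hT).1; linarith
  · by_cases hs : s = t + 1
    · subst hs; linarith
    · have := (hsu (t+1) (Nat.le_succ t) (by omega)).1; linarith

lemma L0_succ_iff (hb : Bnd x α β t) (hb1 : Bnd x α β (t+1)) :
    L0 x α β (t+1) ↔ L0 x α β t := by
  constructor
  · exact fun h s hs => h s (hs.trans (Nat.le_succ t))
  · intro h s hs
    by_cases hst : s ≤ t
    · exact h s hst
    · have : s = t + 1 := by omega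
      subst this; exact hb1

lemma L_succ_iff (hb : Bnd x α β t) (hb1 : Bnd x α β (t+1)) :
    Lp x α β (t+1) ↔ Lp x α β t := by
  constructor
  · rintro (h0 | ⟨s, hst, hsα, hsu⟩)
    · exact Or.inl fun s hs => h0 s (hs.trans (Nat.le_succ t))
    · rcases Nat.lt_succ_iff_lt_or_eq.1 hst with hlt | rfl
      · exact Or.inr ⟨s, hlt, hsα, fun u h1 h2 => hsu u h1 (h2.trans (Nat.le_succ t))⟩
      · exact absurd hb.2 (not_lt.2 hsα)
  · rintro (h0 | ⟨s, hst, hsα, hsu⟩)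
    · refine Or.inl fun s hs => ?_
      by_cases hst : s ≤ t
      · exact h0 s hst
      · have : s = t + 1 := by omega
        subst this; exact hb1
    · refine Or.inr ⟨s, hst.trans (Nat.lt_succ_self t), hsα, fun u h1 h2 => ?_⟩
      by_cases h3 : u ≤ t
      · exact hsu u h1 h3
      · have : u = t + 1 := by omega
        subst this; exact hb1

lemma R_succ_iff (hb : Bnd x α β t) (hb1 : Bnd x α β (t+1)) :
    Rp T x α β (t+1) ↔ Rp T x α β t := by
  constructor
  · rintro (h0 | ⟨s, hts, hsT, hsα, hsu⟩)
    · refine Or.inl fun s hs hsT => ?_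
      by_cases h3 : t + 1 ≤ s
      · exact h0 s h3 hsT
      · have : s = t := by omega
        subst this; exact hb
    · refine Or.inr ⟨s, by omega, hsT, hsα, fun u h1 h2 => ?_⟩
      by_cases h3 : t + 1 ≤ u
      · exact hsu u h3 h2
      · have : u = t := by omega
        subst this; exact hb
  · rintro (h0 | ⟨s, hts, hsT, hsα, hsu⟩)
    · exact Or.inl fun s hs hsT => h0 s (by omega) hsT
    · by_cases hs : s = t + 1
      · subst hs; exact absurd hb1.2 (not_lt.2 hsα)
      · exact Or.inr ⟨s, by omega, hsT, hsα, fun u h1 h2 => hsu u (by omega) h2⟩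

lemma caux {d L n m : ℝ} (hd : 0 < d) (h1 : L = n / d) (h2 : n ≤ m) :
    L ≤ 1 / d * m := by
  rw [h1]
  calc n / d = n * (1/d) := by ring
    _ ≤ m * (1/d) := by
        apply mul_le_mul_of_nonneg_right h2
        positivity
    _ = 1/d * m := by ring

/-- The key one-step amortized inequality. -/
lemma step (hαβ : β < α) (hT : t + 1 < T) :
    |RS T x α β (t+1) - RS T x α β t| + (Phi T x α β (t+1) - Phi T x α β t) ≤
      1 / (α - β) * |x (t+1) - x t| := by
  have hd : (0:ℝ) < α - β := sub_pos.2 hαβ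
  by_cases hA0 : α ≤ x t
  · by_cases hA1 : α ≤ x (t+1)
    · -- A → A
      rw [RS_A hA1, RS_A hA0, Phi_A hA1, Phi_A hA0]
      simp only [sub_self, abs_zero, add_zero]
      positivity
    · by_cases hB1 : x (t+1) ≤ β
      · -- A → B
        refine caux hd (n := α - β) ?_ ?_
        · rw [RS_B hA1 hB1, RS_A hA0, Phi_B hA1 hB1, Phi_A hA0]
          norm_num
          try field_simp
        · rcases abs_cases (x (t+1) - x t) with ⟨h1, h2⟩ | ⟨h1, h2⟩ <;> linarith
      · -- A → band
        have hb1 : Bnd x α β (t+1) := ⟨lt_of_not_ge hB1, lt_of_not_ge hA1⟩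
        have hL1 : Lp x α β (t+1) := L_of_high hA0 hb1
        have hL01 : ¬ L0 x α β (t+1) := notL0_of_high hA0
        by_cases hR1 : Rp T x α β (t+1)
        · -- A → LN
          refine caux hd (n := α - x (t+1)) ?_ ?_
          · rw [RS_live hb1 hL1 hR1, RS_A hA0, Phi_LN hb1 hL01 hL1 hR1, Phi_A hA0]
            norm_num
          · rcases abs_cases (x (t+1) - x t) with ⟨h1, h2⟩ | ⟨h1, h2⟩ <;> linarith
        · -- A → DA
          refine caux hd (n := α - x (t+1)) ?_ ?_
          · rw [RS_dead hb1 (fun h => hR1 h.2), RS_A hA0, Phi_DA hb1 hL1 hR1, Phi_A hA0]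
            norm_num
            try field_simp
            try ring
          · rcases abs_cases (x (t+1) - x t) with ⟨h1, h2⟩ | ⟨h1, h2⟩ <;> linarith
  · by_cases hB0 : x t ≤ β
    · by_cases hA1 : α ≤ x (t+1)
      · -- B → A
        refine caux hd (n := α - β) ?_ ?_
        · rw [RS_A hA1, RS_B hA0 hB0, Phi_A hA1, Phi_B hA0 hB0]
          norm_num
          try field_simp
        · rcases abs_cases (x (t+1) - x t) with ⟨h1, h2⟩ | ⟨h1, h2⟩ <;> linarith
      · by_cases hB1 : x (t+1) ≤ β
        · -- B → B
          rw [RS_B hA1 hB1, RS_B hA0 hB0, Phi_B hA1 hB1, Phi_B hA0 hB0]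
          simp only [sub_self, abs_zero, add_zero]
          positivity
        · -- B → DB
          have hb1 : Bnd x α β (t+1) := ⟨lt_of_not_ge hB1, lt_of_not_ge hA1⟩
          have hL1 : ¬ Lp x α β (t+1) := notL_of_low hαβ hB0
          refine caux hd (n := x (t+1) - β) ?_ ?_
          · rw [RS_dead hb1 (fun h => hL1 h.1), RS_B hA0 hB0, Phi_DB hb1 hL1,
              Phi_B hA0 hB0]
            norm_num
          · rcases abs_cases (x (t+1) - x t) with ⟨h1, h2⟩ | ⟨h1, h2⟩ <;> linarith
    · -- t is in the band
      have hb0 : Bnd x α β t := ⟨lt_of_not_ge hB0, lt_of_not_ge hA0⟩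
      by_cases hA1 : α ≤ x (t+1)
      · -- band → A ; then Rp t holds
        have hR0 : Rp T x α β t := R_of_high hA1 hb0 hT
        by_cases hL00 : L0 x α β t
        · -- LI → A
          refine caux hd (n := α - x t) ?_ ?_
          · rw [RS_A hA1, RS_live hb0 (Or.inl hL00) hR0, Phi_A hA1,
              Phi_LI hb0 hL00 hR0]
            norm_num
            try field_simp
            try ring
          · rcases abs_cases (x (t+1) - x t) with ⟨h1, h2⟩ | ⟨h1, h2⟩ <;> linarith
        · by_cases hL0 : Lp x α β t
          · -- LN → A
            refine caux hd (n := x t - α) ?_ ?_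
            · rw [RS_A hA1, RS_live hb0 hL0 hR0, Phi_A hA1, Phi_LN hb0 hL00 hL0 hR0]
              norm_num
              try field_simp
              try ring
            · rcases abs_cases (x (t+1) - x t) with ⟨h1, h2⟩ | ⟨h1, h2⟩ <;> linarith
          · -- DB → A
            refine caux hd (n := α - x t) ?_ ?_
            · rw [RS_A hA1, RS_dead hb0 (fun h => hL0 h.1), Phi_A hA1, Phi_DB hb0 hL0]
              norm_num
              try field_simp
              try ring
            · rcases abs_cases (x (t+1) - x t) with ⟨h1, h2⟩ | ⟨h1, h2⟩ <;> linarith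
      · by_cases hB1 : x (t+1) ≤ β
        · -- band → B ; then ¬ Rp t
          have hR0 : ¬ Rp T x α β t := notR_of_low hαβ hB1 hT
          by_cases hL0 : Lp x α β t
          · -- DA → B
            refine caux hd (n := x t - β) ?_ ?_
            · rw [RS_B hA1 hB1, RS_dead hb0 (fun h => hR0 h.2), Phi_B hA1 hB1,
                Phi_DA hb0 hL0 hR0]
              norm_num
              try field_simp
              try ring
            · rcases abs_cases (x (t+1) - x t) with ⟨h1, h2⟩ | ⟨h1, h2⟩ <;> linarith
          · -- DB → B
            refine caux hd (n := β - x t) ?_ ?_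
            · rw [RS_B hA1 hB1, RS_dead hb0 (fun h => hL0 h.1), Phi_B hA1 hB1,
                Phi_DB hb0 hL0]
              norm_num
              try field_simp
              try ring
            · rcases abs_cases (x (t+1) - x t) with ⟨h1, h2⟩ | ⟨h1, h2⟩ <;> linarith
        · -- band → band
          have hb1 : Bnd x α β (t+1) := ⟨lt_of_not_ge hB1, lt_of_not_ge hA1⟩
          have hLiff := L_succ_iff (x := x) (α := α) (β := β) hb0 hb1
          have hL0iff := L0_succ_iff (x := x) (α := α) (β := β) hb0 hb1
          have hRiff := R_succ_iff (T := T) (x := x) (α := α) (β := β) hb0 hb1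
          by_cases hR0 : Rp T x α β t
          · have hR1 : Rp T x α β (t+1) := hRiff.2 hR0
            by_cases hL00 : L0 x α β t
            · -- LI → LI
              have hL01 : L0 x α β (t+1) := hL0iff.2 hL00
              refine caux hd (n := x (t+1) - x t) ?_ ?_
              · rw [RS_live hb1 (Or.inl hL01) hR1, RS_live hb0 (Or.inl hL00) hR0,
                  Phi_LI hb1 hL01 hR1, Phi_LI hb0 hL00 hR0]
                norm_num
                try field_simp
                try ring
              · exact le_abs_self _
            · by_cases hL0 : Lp x α β t
              · -- LN → LN
                refine caux hd (n := x t - x (t+1)) ?_ ?_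
                · rw [RS_live hb1 (hLiff.2 hL0) hR1, RS_live hb0 hL0 hR0,
                    Phi_LN hb1 (fun h => hL00 (hL0iff.1 h)) (hLiff.2 hL0) hR1,
                    Phi_LN hb0 hL00 hL0 hR0]
                  norm_num
                  try field_simp
                  try ring
                · rw [abs_sub_comm]; exact le_abs_self _
              · -- DB → DB
                refine caux hd (n := x (t+1) - x t) ?_ ?_
                · rw [RS_dead hb1 (fun h => hL0 (hLiff.1 h.1)),
                    RS_dead hb0 (fun h => hL0 h.1),
                    Phi_DB hb1 (fun h => hL0 (hLiff.1 h)), Phi_DB hb0 hL0]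
                  norm_num
                  try field_simp
                  try ring
                · exact le_abs_self _
          · have hR1 : ¬ Rp T x α β (t+1) := fun h => hR0 (hRiff.1 h)
            by_cases hL0 : Lp x α β t
            · -- DA → DA
              refine caux hd (n := x t - x (t+1)) ?_ ?_
              · rw [RS_dead hb1 (fun h => hR1 h.2), RS_dead hb0 (fun h => hR0 h.2),
                  Phi_DA hb1 (hLiff.2 hL0) hR1, Phi_DA hb0 hL0 hR0]
                norm_num
                try field_simp
                try ring
              · rw [abs_sub_comm]; exact le_abs_self _
            · -- DB → DB
              refine caux hd (n := x (t+1) - x t) ?_ ?_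
              · rw [RS_dead hb1 (fun h => hL0 (hLiff.1 h.1)),
                  RS_dead hb0 (fun h => hL0 h.1),
                  Phi_DB hb1 (fun h => hL0 (hLiff.1 h)), Phi_DB hb0 hL0]
                norm_num
                try field_simp
                try ring
              · exact le_abs_self _

lemma Phi_zero_nonpos (hαβ : β < α) : Phi T x α β 0 ≤ 0 := by
  have hd : (0:ℝ) < α - β := sub_pos.2 hαβ
  by_cases hA : α ≤ x 0
  · rw [Phi_A hA]
  · by_cases hB : x 0 ≤ β
    · rw [Phi_B hA hB]
    · have hb : Bnd x α β 0 := ⟨lt_of_not_ge hB, lt_of_not_ge hA⟩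
      have hL0 : L0 x α β 0 := by
        intro s hs
        have : s = 0 := Nat.le_zero.1 hs
        subst this; exact hb
      by_cases hR : Rp T x α β 0
      · rw [Phi_LI hb hL0 hR]
        apply div_nonpos_of_nonpos_of_nonneg <;> linarith [hb.2]
      · rw [Phi_DA hb (Or.inl hL0) hR]
        apply div_nonpos_of_nonpos_of_nonneg <;> linarith [hb.1]

lemma Phi_last_nonneg (hαβ : β < α) (hT : 1 ≤ T)
    (h : ∃ t0, t0 < T ∧ ¬ Bnd x α β t0) : 0 ≤ Phi T x α β (T - 1) := by
  have hd : (0:ℝ) < α - β := sub_pos.2 hαβ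
  by_cases hA : α ≤ x (T-1)
  · rw [Phi_A hA]
  · by_cases hB : x (T-1) ≤ β
    · rw [Phi_B hA hB]
    · have hb : Bnd x α β (T-1) := ⟨lt_of_not_ge hB, lt_of_not_ge hA⟩
      have hR : Rp T x α β (T-1) := by
        refine Or.inl fun s hs hsT => ?_
        have : s = T - 1 := by omega
        subst this; exact hb
      obtain ⟨t0, ht0, ht0'⟩ := h
      have hL0 : ¬ L0 x α β (T-1) := fun hh => ht0' (hh t0 (by omega))
      by_cases hL : Lp x α β (T-1)
      · rw [Phi_LN hb hL0 hL hR]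
        apply div_nonneg <;> linarith [hb.2]
      · rw [Phi_DB hb hL]
        apply div_nonneg <;> linarith [hb.1]

end RSproof

/-- the total transition cost of `y = RS(x,α,β)` is at most
`1/(α-β)` times that of `x`. -/
theorem stmt_2 (T : ℕ) (x : ℕ → ℝ) (α β : ℝ)
    (hx : ∀ t, t < T → 0 ≤ x t ∧ x t ≤ 1)
    (hα : α ≤ 1) (hαβ : β < α) (hβ : 0 ≤ β) :
    ∑ t ∈ Finset.range (T - 1), |RS T x α β (t + 1) - RS T x α β t| ≤
      (1 / (α - β)) * ∑ t ∈ Finset.range (T - 1), |x (t + 1) - x t| := by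
  classical
  have hd : (0:ℝ) < α - β := sub_pos.2 hαβ
  have hRHS : 0 ≤ (1 / (α - β)) * ∑ t ∈ Finset.range (T - 1), |x (t + 1) - x t| := by
    apply mul_nonneg
    · positivity
    · exact Finset.sum_nonneg fun i _ => abs_nonneg _
  by_cases hall : ∀ t, t < T → RSproof.Bnd x α β t
  · -- everything is in the band: y ≡ 1
    have hzero : ∀ t ∈ Finset.range (T - 1),
        |RS T x α β (t + 1) - RS T x α β t| = 0 := by
      intro t ht
      have ht' : t < T - 1 := Finset.mem_range.1 ht
      have h1 : RS T x α β t = 1 :=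
        RSproof.RS_live (hall t (by omega))
          (Or.inl fun s hs => hall s (by omega))
          (Or.inl fun s _ hs => hall s hs)
      have h2 : RS T x α β (t+1) = 1 :=
        RSproof.RS_live (hall (t+1) (by omega))
          (Or.inl fun s hs => hall s (by omega))
          (Or.inl fun s _ hs => hall s hs)
      rw [h1, h2, sub_self, abs_zero]
    rw [Finset.sum_congr rfl hzero]
    simpa using hRHS
  · rcases Nat.lt_or_ge T 2 with hT2 | hT2
    · have : T - 1 = 0 := by omega
      rw [this]
      simpa using hRHS
    · push_neg at hall
      obtain ⟨t0, ht0, ht0'⟩ := hall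
      have key : ∀ t ∈ Finset.range (T - 1),
          |RS T x α β (t + 1) - RS T x α β t| ≤
            1 / (α - β) * |x (t + 1) - x t| +
              (RSproof.Phi T x α β t - RSproof.Phi T x α β (t + 1)) := by
        intro t ht
        have ht' : t < T - 1 := Finset.mem_range.1 ht
        have := RSproof.step (T := T) (x := x) (α := α) (β := β) (t := t) hαβ
          (by omega)
        linarith
      calc ∑ t ∈ Finset.range (T - 1), |RS T x α β (t + 1) - RS T x α β t|
          ≤ ∑ t ∈ Finset.range (T - 1), (1 / (α - β) * |x (t + 1) - x t| +
              (RSproof.Phi T x α β t - RSproof.Phi T x α β (t + 1))) :=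
            Finset.sum_le_sum key
        _ = (1 / (α - β)) * ∑ t ∈ Finset.range (T - 1), |x (t + 1) - x t| +
              (RSproof.Phi T x α β 0 - RSproof.Phi T x α β (T - 1)) := by
            rw [Finset.sum_add_distrib, ← Finset.mul_sum, Finset.sum_range_sub']
        _ ≤ (1 / (α - β)) * ∑ t ∈ Finset.range (T - 1), |x (t + 1) - x t| := by
            have h1 := RSproof.Phi_zero_nonpos (T := T) (x := x) hαβ
            have h2 := RSproof.Phi_last_nonneg (T := T) (x := x) hαβ (by omega)
              ⟨t0, ht0, ht0'⟩
            linarith
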